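/- For any positive integer n, evaluating at q = 1 the product ∏_d Φ_d(q), taken over all positive integers d ≤ n for which there exists some k with 1 ≤ k ≤ n satisfying ⌊k/d⌋ + ⌊(n-k)/d⌋ < ⌊n/d⌋, yields the integer lcm(C(n,0), C(n,1), ..., C(n,n)). -/

import Mathlib

open Polynomial
open scoped Classical


noncomputable def ppart (d : ℕ) : ℕ := if IsPrimePow d then d.minFac else 1

lemma ppart_pos (d : ℕ) : 0 < ppart d := by
  unfold ppart; split
  · exact Nat.minFac_pos d
  · exact one_pos

lemma no_carry {d n k : ℕ} (hd : 0 < d) (hdvd : d ∣ n + 1) (hk : k ≤ n) :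
    k % d + (n - k) % d < d := by
  obtain ⟨m, hm⟩ := hdvd
  have hnd : n % d = d - 1 := by
    rcases m with _ | m
    · omega
    · have hn : n = d * m + (d - 1) := by
        have : d * (m + 1) = d * m + d := by ring
        omega
      rw [hn, Nat.mul_add_mod, Nat.mod_eq_of_lt (by omega)]
  have e1 : k % d < d := Nat.mod_lt _ hd
  have e2 : (n - k) % d < d := Nat.mod_lt _ hd
  have e3 : (k % d + (n - k) % d) % d = d - 1 := by
    rw [← Nat.add_mod, Nat.add_sub_cancel' hk, hnd]
  by_contra h
  push_neg at h
  have e5 : k % d + (n - k) % d - d < d := by omega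
  have e4 : (k % d + (n - k) % d - d) % d = d - 1 := by
    rw [← Nat.mod_eq_sub_mod h, e3]
  rw [Nat.mod_eq_of_lt e5] at e4
  omega

lemma carry_iff {n d : ℕ} (hd1 : 1 ≤ d) (hdn : d ≤ n) :
    (∃ k ∈ Finset.Icc 1 n, k / d + (n - k) / d < n / d) ↔ ¬ d ∣ (n + 1) := by
  constructor
  · rintro ⟨k, hk, hlt⟩ hdvd
    rw [Finset.mem_Icc] at hk
    have hnc := no_carry hd1 hdvd hk.2
    have hsplit : n / d = k / d + (n - k) / d +
        if d ≤ k % d + (n - k) % d then 1 else 0 := by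
      conv_lhs => rw [← Nat.add_sub_cancel' hk.2]
      rw [Nat.add_div hd1]
    rw [if_neg (not_le.mpr hnc)] at hsplit
    omega
  · intro hdvd
    have hr : n % d < d := Nat.mod_lt _ hd1
    have hq : 1 ≤ n / d := (Nat.one_le_div_iff hd1).mpr hdn
    have hdm := Nat.div_add_mod n d
    have hrne : n % d ≠ d - 1 := by
      intro h
      exact hdvd ⟨n / d + 1, by rw [Nat.mul_add, Nat.mul_one]; omega⟩
    refine ⟨n % d + 1, Finset.mem_Icc.mpr ⟨Nat.succ_pos _, by omega⟩, ?_⟩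
    have hklt : n % d + 1 < d := by omega
    have h1 : (n % d + 1) / d = 0 := Nat.div_eq_of_lt hklt
    have hge : d ≤ d * (n / d) := Nat.le_mul_of_pos_right d hq
    have h2 : n - (n % d + 1) = d * (n / d - 1) + (d - 1) := by
      have : d * (n / d - 1) = d * (n / d) - d := by
        rw [Nat.mul_sub, Nat.mul_one]
      omega
    have h3 : (n - (n % d + 1)) / d = n / d - 1 := by
      rw [h2, Nat.mul_add_div hd1, Nat.div_eq_of_lt (show d - 1 < d by omega), Nat.add_zero]
    omega

lemma eval_one_cyclotomic_eq_ppart {d : ℕ} (hd : 2 ≤ d) :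
    (cyclotomic d ℤ).eval 1 = (ppart d : ℤ) := by
  by_cases h : IsPrimePow d
  · obtain ⟨p, k, hp, hk, rfl⟩ := h
    have hp' : p.Prime := Nat.prime_iff.mpr hp
    haveI : Fact p.Prime := ⟨hp'⟩
    obtain ⟨j, rfl⟩ : ∃ j, k = j + 1 := ⟨k - 1, by omega⟩
    rw [eval_one_cyclotomic_prime_pow]
    unfold ppart
    rw [if_pos ⟨p, j + 1, hp, by omega, rfl⟩, hp'.pow_minFac (by omega)]
  · have hnp : ∀ {p : ℕ}, p.Prime → ∀ k : ℕ, p ^ k ≠ d := by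
      intro p hp k hpk
      rcases Nat.eq_zero_or_pos k with rfl | hk
      · simp at hpk; omega
      · exact h ⟨p, k, hp.prime, hk, hpk⟩
    rw [eval_one_cyclotomic_not_prime_pow hnp]
    unfold ppart
    rw [if_neg h]
    simp

lemma ppart_factorization {p : ℕ} (hp : p.Prime) (d : ℕ) :
    (ppart d).factorization p = if ∃ i, 0 < i ∧ d = p ^ i then 1 else 0 := by
  split_ifs with h
  · obtain ⟨i, hi, rfl⟩ := h
    unfold ppart
    rw [if_pos ⟨p, i, hp.prime, hi, rfl⟩, hp.pow_minFac hi.ne']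
    exact hp.factorization_self
  · by_cases h2 : IsPrimePow d
    · obtain ⟨q, k, hq, hk, rfl⟩ := h2
      have hq' : q.Prime := Nat.prime_iff.mpr hq
      unfold ppart
      rw [if_pos ⟨q, k, hq, hk, rfl⟩, hq'.pow_minFac hk.ne']
      have hqp : q ≠ p := by
        rintro rfl
        exact h ⟨k, hk, rfl⟩
      rw [hq'.factorization, Finsupp.single_apply, if_neg hqp]
    · unfold ppart
      rw [if_neg h2]
      simp

lemma card_powers {p n : ℕ} (hp : p.Prime) (hn : 0 < n) :
    ((((Finset.Icc 1 n).filter (fun d => ¬ d ∣ (n + 1))).filter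
        (fun d => ∃ i, 0 < i ∧ d = p ^ i))).card
      = ((Finset.Ico 1 (Nat.log p n + 1)).filter (fun i => ¬ p ^ i ∣ (n + 1))).card := by
  refine Finset.card_nbij' (fun d => Nat.log p d) (fun i => p ^ i) ?_ ?_ ?_ ?_
  · intro d hd
    simp only [Finset.mem_coe, Finset.mem_filter, Finset.mem_Icc, Finset.mem_Ico] at hd ⊢
    obtain ⟨⟨⟨hd1, hdn⟩, hdvd⟩, i, hi, rfl⟩ := hd
    rw [Nat.log_pow hp.one_lt]
    refine ⟨⟨hi, ?_⟩, hdvd⟩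
    have := (Nat.le_log_iff_pow_le hp.one_lt hn.ne').mpr hdn
    omega
  · intro i hi
    simp only [Finset.mem_coe, Finset.mem_filter, Finset.mem_Icc, Finset.mem_Ico] at hi ⊢
    obtain ⟨⟨hi1, hi2⟩, hdvd⟩ := hi
    refine ⟨⟨⟨Nat.one_le_pow _ _ hp.pos, ?_⟩, hdvd⟩, i, hi1, rfl⟩
    exact (Nat.le_log_iff_pow_le hp.one_lt hn.ne').mp (by omega)
  · intro d hd
    simp only [Finset.mem_coe, Finset.mem_filter] at hd
    obtain ⟨-, i, hi, rfl⟩ := hd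
    simp [Nat.log_pow hp.one_lt]
  · intro i hi
    simp [Nat.log_pow hp.one_lt]

lemma factorization_choose_eq_card {p n k : ℕ} (hp : p.Prime) (hkn : k ≤ n) :
    (n.choose k).factorization p
      = ((Finset.Ico 1 (Nat.log p n + 1)).filter
          (fun i => p ^ i ≤ k % p ^ i + (n - k) % p ^ i)).card := by
  rw [Nat.factorization_def _ hp, @padicValNat_def _ ⟨hp⟩ _ (Nat.choose_pos hkn).ne']
  exact multiplicity_eq_of_emultiplicity_eq_some
    (hp.emultiplicity_choose hkn (Nat.lt_succ_self _))

lemma main_nat {n : ℕ} (hn : 0 < n) :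
    ∏ d ∈ (Finset.Icc 1 n).filter (fun d => ¬ d ∣ (n + 1)), ppart d
      = (Finset.range (n + 1)).lcm n.choose := by
  set T := (Finset.Icc 1 n).filter (fun d => ¬ d ∣ (n + 1)) with hT
  set M := ∏ d ∈ T, ppart d with hM
  have hM0 : 0 < M := Finset.prod_pos (fun d _ => ppart_pos d)
  have hMfact : ∀ p : ℕ, p.Prime → M.factorization p
      = ((Finset.Ico 1 (Nat.log p n + 1)).filter (fun i => ¬ p ^ i ∣ (n + 1))).card := by
    intro p hp
    rw [hM, Nat.factorization_prod (fun d _ => (ppart_pos d).ne')]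
    rw [Finsupp.finset_sum_apply]
    rw [Finset.sum_congr rfl (fun d _ => ppart_factorization hp d)]
    rw [Finset.sum_boole, Nat.cast_id]
    exact card_powers hp hn
  apply Nat.dvd_antisymm
  · -- M ∣ lcm of binomials
    have h1 : (Finset.Icc 1 (n + 1)).lcm id ∣ (n + 1) * (Finset.range (n + 1)).lcm n.choose := by
      apply Finset.lcm_dvd
      intro m hm
      rw [Finset.mem_Icc] at hm
      have key : (n + 1) * n.choose (m - 1) = (n + 1).choose m * m := by
        have h := Nat.add_one_mul_choose_eq n (m - 1)
        rw [show m - 1 + 1 = m by omega] at h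
        exact h
      have hmd : m ∣ (n + 1) * n.choose (m - 1) := ⟨(n + 1).choose m, by rw [key]; ring⟩
      exact hmd.trans (mul_dvd_mul_left (n + 1)
        (Finset.dvd_lcm (Finset.mem_range.mpr (by omega))))
    have h2 : (n + 1) * M ∣ (Finset.Icc 1 (n + 1)).lcm id := by
      rw [Nat.dvd_iff_prime_pow_dvd_dvd]
      intro p k hp hpk
      have hk : k ≤ ((n + 1) * M).factorization p :=
        (hp.pow_dvd_iff_le_factorization (by positivity)).mp hpk
      rw [Nat.factorization_mul (by omega) hM0.ne', Finsupp.add_apply] at hk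
      set v := (n + 1).factorization p with hv
      have hpv : p ^ v ∣ n + 1 := Nat.ordProj_dvd (n + 1) p
      have hvL : v ≤ Nat.log p (n + 1) :=
        (Nat.le_log_iff_pow_le hp.one_lt (by omega)).mpr (Nat.le_of_dvd (by omega) hpv)
      have hcard : M.factorization p ≤ Nat.log p n - v := by
        rw [hMfact p hp]
        have hsub : (Finset.Ico 1 (Nat.log p n + 1)).filter (fun i => ¬ p ^ i ∣ (n + 1))
            ⊆ Finset.Ioc v (Nat.log p n) := by
          intro i hi
          simp only [Finset.mem_filter, Finset.mem_Ico, Finset.mem_Ioc] at hi ⊢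
          refine ⟨?_, by omega⟩
          by_contra hle
          exact hi.2 (dvd_trans (pow_dvd_pow p (by omega)) hpv)
        calc _ ≤ (Finset.Ioc v (Nat.log p n)).card := Finset.card_le_card hsub
        _ = Nat.log p n - v := Nat.card_Ioc _ _
      have hlog : Nat.log p n ≤ Nat.log p (n + 1) := Nat.log_mono_right (by omega)
      have hkL : k ≤ Nat.log p (n + 1) := by omega
      have hmem : p ^ Nat.log p (n + 1) ∈ Finset.Icc 1 (n + 1) :=
        Finset.mem_Icc.mpr ⟨Nat.one_le_pow _ _ hp.pos, Nat.pow_log_le_self p (by omega)⟩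
      exact dvd_trans (pow_dvd_pow p hkL) (Finset.dvd_lcm hmem)
    have := h2.trans h1
    exact (Nat.mul_dvd_mul_iff_left (Nat.succ_pos n)).mp this
  · -- lcm of binomials ∣ M
    apply Finset.lcm_dvd
    intro k hk
    rw [Finset.mem_range] at hk
    have hkn : k ≤ n := by omega
    rw [← Nat.factorization_le_iff_dvd (Nat.choose_pos hkn).ne' hM0.ne', Finsupp.le_def]
    intro p
    by_cases hp : p.Prime
    · rw [factorization_choose_eq_card hp hkn, hMfact p hp]
      apply Finset.card_le_card
      intro i hi
      simp only [Finset.mem_filter, Finset.mem_Ico] at hi ⊢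
      refine ⟨hi.1, fun hdvd => ?_⟩
      exact absurd hi.2 (not_le.mpr (no_carry (Nat.pow_pos (n := i) hp.pos) hdvd hkn))
    · rw [Nat.factorization_eq_zero_of_not_prime _ hp]
      exact Nat.zero_le _


/-- Evaluating at `q = 1` the product of the cyclotomic polynomials `Φ_d(q)`, over all
positive integers `d ≤ n` such that `⌊k/d⌋ + ⌊(n-k)/d⌋ < ⌊n/d⌋` holds for some `1 ≤ k ≤ n`,
yields `lcm(C(n,0), C(n,1), ..., C(n,n))`. -/
theorem eval_one_prod_cyclotomic_eq_lcm_choose (n : ℕ) (hn : 0 < n) :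
    (∏ d ∈ (Finset.Icc 1 n).filter
        (fun d => ∃ k ∈ Finset.Icc 1 n, k / d + (n - k) / d < n / d),
      cyclotomic d ℤ).eval 1
      = ((Finset.range (n + 1)).lcm (n.choose) : ℕ) := by
  have hfilter : (Finset.Icc 1 n).filter
      (fun d => ∃ k ∈ Finset.Icc 1 n, k / d + (n - k) / d < n / d)
      = (Finset.Icc 1 n).filter (fun d => ¬ d ∣ (n + 1)) := by
    ext d
    simp only [Finset.mem_filter]
    exact and_congr_right fun hd =>
      carry_iff (Finset.mem_Icc.mp hd).1 (Finset.mem_Icc.mp hd).2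
  rw [hfilter, eval_prod]
  have hprod : ∀ d ∈ (Finset.Icc 1 n).filter (fun d => ¬ d ∣ (n + 1)),
      (cyclotomic d ℤ).eval 1 = (ppart d : ℤ) := by
    intro d hd
    simp only [Finset.mem_filter, Finset.mem_Icc] at hd
    apply eval_one_cyclotomic_eq_ppart
    rcases Nat.lt_or_ge d 2 with h | h
    · exfalso
      have h1 : d = 1 := by omega
      exact hd.2 (by rw [h1]; exact one_dvd _)
    · exact h
  rw [Finset.prod_congr rfl hprod, ← Nat.cast_prod, main_nat hn]
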